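/- For every n ∈ ℕ, every δ ∈ (0,1), and every integer s with 8·ln(4/δ) < s ≤ n, the mechanism C_s is (ε, δ/2)-differentially private with ε = √(32·ln(4/δ)/s) · (1 − s/n): for all x, x' ∈ {0,1}^n differing in at most one coordinate and every set W ⊆ {0,1,…,n}, Pr[C_s(x) ∈ W] ≤ exp(√(32·ln(4/δ)/s) · (1 − s/n)) · Pr[C_s(x') ∈ W] + δ/2. -/

import Mathlib

open scoped ENNReal Classical

noncomputable section

namespace ShuffledDP

universe u v w

lemma half_le_one : (2⁻¹ : ℝ≥0∞) ≤ 1 := by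
  simp [ENNReal.inv_le_one]

/-- Independent samples from a finite family of PMFs, collected (in order) as a list. -/
noncomputable def indep {α : Type u} : (n : ℕ) → (Fin n → PMF α) → PMF (List α)
  | 0, _ => PMF.pure []
  | n + 1, f =>
      (f 0).bind fun y => (indep n fun i => f i.succ).bind fun ys => PMF.pure (y :: ys)

/-- `(ε, δ)`-differential privacy of a mechanism `M` with respect to a
neighboring relation `nbr` on inputs. -/
def DPFor {I : Type u} {Z : Type v} (nbr : I → I → Prop) (M : I → PMF Z) (ε δ : ℝ) : Prop :=
  ∀ x x', nbr x x' → ∀ T : Set Z,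
    (M x).toOuterMeasure T ≤
      ENNReal.ofReal (Real.exp ε) * (M x').toOuterMeasure T + ENNReal.ofReal δ

/-- Two datasets are neighbors if they differ in at most one coordinate. -/
def Neighbor {n : ℕ} {X : Type u} (x x' : Fin n → X) : Prop :=
  ∃ j, ∀ i, i ≠ j → x i = x' i

/-- The randomized-response local randomizer `R_{n,λ}`: output the input bit with
probability `1 - λ/n` and a uniformly random bit with probability `λ/n`. -/
noncomputable def rr (n : ℕ) (lam : ℝ) (x : Bool) : PMF Bool :=
  (PMF.bernoulli (min (ENNReal.ofReal (lam / n)) 1).toNNReal (by simpa using ENNReal.toNNReal_mono ENNReal.one_ne_top (min_le_right _ _))).bind fun b =>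
    if b then PMF.bernoulli (2⁻¹ : ℝ≥0∞).toNNReal (by simpa using ENNReal.toNNReal_mono ENNReal.one_ne_top (half_le_one)) else PMF.pure x

/-- Binomial distribution, valued in `ℕ`. -/
noncomputable def binom (p : ℝ≥0∞) (h : p ≤ 1) (m : ℕ) : PMF ℕ :=
  (PMF.binomial p.toNNReal (by simpa using ENNReal.toNNReal_mono ENNReal.one_ne_top (h)) m).map Fin.val

/-- Uniform distribution over the subsets of `Fin n` of size `s`. -/
noncomputable def uniformSubset (n s : ℕ) : PMF (Finset (Fin n)) :=
  if h : ((Finset.univ : Finset (Fin n)).powersetCard s).Nonempty then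
    PMF.uniformOfFinset _ h
  else PMF.pure ∅

/-- `∑_{i ∉ H} x_i` for a boolean dataset `x`. -/
def sumOutside {n : ℕ} (H : Finset (Fin n)) (x : Fin n → Bool) : ℕ :=
  ∑ i ∈ Hᶜ, (if x i then 1 else 0)

/-- The mechanism `C_H`: output `∑_{i ∉ H} x_i + B` with `B ~ Bin(|H|, 1/2)`. -/
noncomputable def CH (n : ℕ) (H : Finset (Fin n)) (x : Fin n → Bool) : PMF ℕ :=
  (binom 2⁻¹ half_le_one H.card).map fun B => sumOutside H x + B

/-- The mechanism `C_s`: sample `H` uniformly among size-`s` subsets, then run `C_H`. -/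
noncomputable def Cs (n s : ℕ) (x : Fin n → Bool) : PMF ℕ :=
  (uniformSubset n s).bind fun H => CH n H x

/-- The mechanism `C_λ`: sample `s ~ Bin(n, λ/n)`, then run `C_s`. -/
noncomputable def Cmech (n : ℕ) (lam : ℝ) (x : Fin n → Bool) : PMF ℕ :=
  (binom (min (ENNReal.ofReal (lam / n)) 1) (min_le_right _ _) n).bind fun s => Cs n s x

/-- The shuffled bit-sum mechanism `Π_{n,λ}`: the random multiset `{y_1, …, y_n}`
of the outputs `y_i ~ R_{n,λ}(x_i)`. -/
noncomputable def shuffleBit (n : ℕ) (lam : ℝ) (x : Fin n → Bool) : PMF (Multiset Bool) :=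
  (indep n fun i => rr n lam (x i)).map fun l => (l : Multiset Bool)

/-- The bit-sum protocol output `P_{n,λ}(x) = (n/(n-λ)) (∑ y_i - λ/2)`. -/
noncomputable def bitSumOutput (n : ℕ) (lam : ℝ) (x : Fin n → Bool) : PMF ℝ :=
  (indep n fun i => rr n lam (x i)).map fun l =>
    ((n : ℝ) / (n - lam)) * ((l.count true : ℝ) - lam / 2)

/-- The randomized-rounding encoder `E_r`. -/
noncomputable def encoder (r : ℕ) (x : ℝ) : PMF (Fin r → Bool) :=
  (PMF.bernoulli (min (ENNReal.ofReal (x * r - ⌈x * r⌉ + 1)) 1).toNNReal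
      (by simpa using ENNReal.toNNReal_mono ENNReal.one_ne_top (min_le_right _ _))).map
    fun b i => if ((i : ℕ) : ℤ) + 1 < ⌈x * r⌉ then true
      else if ((i : ℕ) : ℤ) + 1 = ⌈x * r⌉ then b else false

/-- The real-sum shuffled mechanism `Π^ℝ_{n,λ,r}`: the random multiset of all `n·r`
bits `y_{i,j} ~ R_{n,λ}(b_{i,j})` where `(b_{i,1},…,b_{i,r}) = E_r(x_i)`. -/
noncomputable def realShuffle (n : ℕ) (lam : ℝ) (r : ℕ) (X : Fin n → ℝ) :
    PMF (Multiset Bool) :=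
  (indep n fun i =>
      (encoder r (X i)).bind fun b =>
        (indep r fun j => rr n lam (b j)).map fun l => (l : Multiset Bool)).map
    fun ms => ms.sum

/-- The real-sum protocol output `z = (1/r)(n/(n-λ)) (∑_{i,j} y_{i,j} - λ r/2)`. -/
noncomputable def realOutput (n : ℕ) (lam : ℝ) (r : ℕ) (X : Fin n → ℝ) : PMF ℝ :=
  (realShuffle n lam r X).map fun m =>
    (1 / (r : ℝ)) * ((n : ℝ) / (n - lam)) * ((m.count true : ℝ) - lam * r / 2)

/-- The shuffled mechanism associated with a randomizer producing a multiset of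
messages: the union (multiset sum) of the `n` users' message multisets. -/
noncomputable def shuffM {𝒳 : Type u} {𝒴 : Type v} (n : ℕ) (R : 𝒳 → PMF (Multiset 𝒴))
    (x : Fin n → 𝒳) : PMF (Multiset 𝒴) :=
  (indep n fun i => R (x i)).map fun l => l.sum

/-- The multiset of the `m` messages output by an `m`-message randomizer. -/
noncomputable def vecR {𝒳 : Type u} {𝒴 : Type v} {m : ℕ} (R : 𝒳 → PMF (Fin m → 𝒴)) :
    𝒳 → PMF (Multiset 𝒴) :=
  fun a => (R a).map fun v => ((List.ofFn v : List 𝒴) : Multiset 𝒴)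

/-- The one-message shuffled mechanism `Π_R`: the random multiset `{R(x_1), …, R(x_n)}`. -/
noncomputable def shuffle1 {𝒳 : Type u} {𝒴 : Type v} (n : ℕ) (R : 𝒳 → PMF 𝒴)
    (x : Fin n → 𝒳) : PMF (Multiset 𝒴) :=
  (indep n fun i => R (x i)).map fun l => (l : Multiset 𝒴)

/-- `(ε, δ)`-differential privacy of a local randomizer (any two inputs are neighbors). -/
def RandDP {𝒳 : Type u} {𝒴 : Type v} (R : 𝒳 → PMF 𝒴) (ε δ : ℝ) : Prop :=
  ∀ x x' : 𝒳, ∀ T : Set 𝒴,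
    (R x).toOuterMeasure T ≤
      ENNReal.ofReal (Real.exp ε) * (R x').toOuterMeasure T + ENNReal.ofReal δ

/-- The output of the local protocol `(R, A)`. -/
noncomputable def localOut {𝒳 : Type u} {𝒴 : Type v} {𝒵 : Type w} (n : ℕ)
    (R : 𝒳 → PMF 𝒴) (A : List 𝒴 → 𝒵) (X : Fin n → 𝒳) : PMF 𝒵 :=
  (indep n fun i => R (X i)).map A

/-- `(a, b)`-accuracy of a protocol `P` for a function `f` w.r.t. a distance `d`. -/
def AccFor {I : Type u} {𝒵 : Type w} (P : I → PMF 𝒵) (f : I → 𝒵) (d : 𝒵 → 𝒵 → ℝ)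
    (a b : ℝ) : Prop :=
  ∀ X, ENNReal.ofReal (1 - b) ≤ (P X).toOuterMeasure {z | d z (f X) ≤ a}


open Finset

lemma exp_quad {x : ℝ} (h : 0 ≤ x) : 1 + x + x^2/2 ≤ Real.exp x := by
  have := Real.sum_le_exp_of_nonneg h 3
  simp [Finset.sum_range_succ] at this
  nlinarith [this]

lemma chernoff_upper (s : ℕ) (c t : ℝ) (ht : 0 ≤ t) :
    ∑ m ∈ range (s+1), (if (s:ℝ)/2 + c < (m:ℝ) then ((s.choose m : ℝ) * (2⁻¹:ℝ)^s) else 0)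
      ≤ Real.exp ((s:ℝ) * t^2/8 - t*c) := by
  have h1 : ∀ m ∈ range (s+1),
      (if (s:ℝ)/2 + c < (m:ℝ) then ((s.choose m : ℝ) * (2⁻¹:ℝ)^s) else 0)
        ≤ ((s.choose m : ℝ) * (2⁻¹:ℝ)^s) * Real.exp (t * ((m:ℝ) - ((s:ℝ)/2 + c))) := by
    intro m _
    split_ifs with h
    · nth_rewrite 1 [← mul_one ((s.choose m : ℝ) * (2⁻¹:ℝ)^s)]
      have h2 : (1:ℝ) ≤ Real.exp (t * ((m:ℝ) - ((s:ℝ)/2 + c))) := by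
        rw [← Real.exp_zero]
        apply Real.exp_le_exp.mpr
        have : (0:ℝ) ≤ (m:ℝ) - ((s:ℝ)/2 + c) := by linarith
        positivity
      exact mul_le_mul_of_nonneg_left h2 (by positivity)
    · positivity
  have h2 : ∑ m ∈ range (s+1), ((s.choose m : ℝ) * (2⁻¹:ℝ)^s) * Real.exp (t * ((m:ℝ) - ((s:ℝ)/2 + c)))
      = (2⁻¹:ℝ)^s * Real.exp (-(t * ((s:ℝ)/2 + c))) *
        ∑ m ∈ range (s+1), (Real.exp t)^m * 1^(s - m) * (s.choose m : ℝ) := by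
    rw [Finset.mul_sum]
    refine Finset.sum_congr rfl fun m _ => ?_
    rw [mul_sub, Real.exp_sub, mul_comm t (m:ℝ), Real.exp_nat_mul]
    rw [Real.exp_neg]
    field_simp
    ring
  have h3 : ∑ m ∈ range (s+1), (Real.exp t)^m * 1^(s - m) * (s.choose m : ℝ)
      = (Real.exp t + 1)^s := by
    rw [add_pow]
  have h4 : (2⁻¹:ℝ)^s * (Real.exp t + 1)^s ≤ Real.exp ((s:ℝ) * (t/2 + t^2/8)) := by
    have hc : (2⁻¹:ℝ) * (Real.exp t + 1) = Real.exp (t/2) * Real.cosh (t/2) := by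
      rw [Real.cosh_eq]
      have e1 : Real.exp (t/2) * Real.exp (t/2) = Real.exp t := by rw [← Real.exp_add]; norm_num
      have e2 : Real.exp (t/2) * Real.exp (-(t/2)) = 1 := by rw [← Real.exp_add]; norm_num
      linear_combination (-1/2)*e1 + (-1/2)*e2
    calc (2⁻¹:ℝ)^s * (Real.exp t + 1)^s = ((2⁻¹:ℝ) * (Real.exp t + 1))^s := by rw [mul_pow]
      _ ≤ (Real.exp (t/2) * Real.exp ((t/2)^2/2))^s := by
          apply pow_le_pow_left₀ (by positivity)
          rw [hc]
          exact mul_le_mul_of_nonneg_left (Real.cosh_le_exp_half_sq _) (Real.exp_nonneg _)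
      _ = Real.exp ((s:ℝ) * (t/2 + t^2/8)) := by
          rw [← Real.exp_add, ← Real.exp_nat_mul]
          ring_nf
  calc ∑ m ∈ range (s+1), (if (s:ℝ)/2 + c < (m:ℝ) then ((s.choose m : ℝ) * (2⁻¹:ℝ)^s) else 0)
      ≤ ∑ m ∈ range (s+1), ((s.choose m : ℝ) * (2⁻¹:ℝ)^s) * Real.exp (t * ((m:ℝ) - ((s:ℝ)/2 + c))) :=
        Finset.sum_le_sum h1
    _ = (2⁻¹:ℝ)^s * Real.exp (-(t * ((s:ℝ)/2 + c))) * ∑ m ∈ range (s+1), (Real.exp t)^m * 1^(s-m) * (s.choose m : ℝ) := h2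
    _ = Real.exp (-(t * ((s:ℝ)/2 + c))) * ((2⁻¹:ℝ)^s * (Real.exp t + 1)^s) := by rw [h3]; ring
    _ ≤ Real.exp (-(t * ((s:ℝ)/2 + c))) * Real.exp ((s:ℝ) * (t/2 + t^2/8)) := by
        exact mul_le_mul_of_nonneg_left h4 (Real.exp_nonneg _)
    _ = Real.exp ((s:ℝ) * t^2/8 - t*c) := by rw [← Real.exp_add]; ring_nf


lemma tail_two (s : ℕ) (w : ℝ) (hw : 0 ≤ w) :
    ∑ m ∈ range (s+1),
      (if ¬ |(m:ℝ) - (s:ℝ)/2| ≤ (s:ℝ)*w/2 then ((s.choose m : ℝ) * (2⁻¹:ℝ)^s) else 0)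
      ≤ 2 * Real.exp (-((s:ℝ)*w^2/2)) := by
  set c := (s:ℝ)*w/2 with hc
  have hc0 : 0 ≤ c := by positivity
  have hsplit : ∀ m ∈ range (s+1),
      (if ¬ |(m:ℝ)-(s:ℝ)/2| ≤ c then ((s.choose m:ℝ)*(2⁻¹:ℝ)^s) else 0)
      = (if (s:ℝ)/2 + c < (m:ℝ) then ((s.choose m:ℝ)*(2⁻¹:ℝ)^s) else 0)
        + (if ((m:ℝ)) < (s:ℝ)/2 - c then ((s.choose m:ℝ)*(2⁻¹:ℝ)^s) else 0) := by
    intro m _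
    by_cases hP : (s:ℝ)/2 + c < (m:ℝ)
    · have h1 : ¬ |(m:ℝ)-(s:ℝ)/2| ≤ c := by
        rw [abs_le]; rintro ⟨h1, h2⟩; linarith
      have hQ : ¬ ((m:ℝ) < (s:ℝ)/2 - c) := by push_neg; linarith
      simp [h1, hP, hQ]
    · by_cases hQ : (m:ℝ) < (s:ℝ)/2 - c
      · have h1 : ¬ |(m:ℝ)-(s:ℝ)/2| ≤ c := by
          rw [abs_le]; rintro ⟨h1, h2⟩; linarith
        simp [h1, hP, hQ]
      · push_neg at hP hQ
        have h1 : |(m:ℝ)-(s:ℝ)/2| ≤ c := by rw [abs_le]; constructor <;> linarith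
        simp [h1, hP, hQ, not_lt.mpr hP, not_lt.mpr hQ]
  rw [Finset.sum_congr rfl hsplit, Finset.sum_add_distrib]
  have hup : ∑ m ∈ range (s+1), (if (s:ℝ)/2 + c < (m:ℝ) then ((s.choose m:ℝ)*(2⁻¹:ℝ)^s) else 0)
      ≤ Real.exp (-((s:ℝ)*w^2/2)) := by
    have := chernoff_upper s c (2*w) (by positivity)
    have harg : (s:ℝ) * (2*w)^2/8 - (2*w)*c = -((s:ℝ)*w^2/2) := by rw [hc]; ring
    rwa [harg] at this
  have hlo : ∑ m ∈ range (s+1), (if ((m:ℝ)) < (s:ℝ)/2 - c then ((s.choose m:ℝ)*(2⁻¹:ℝ)^s) else 0)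
      = ∑ m ∈ range (s+1), (if (s:ℝ)/2 + c < (m:ℝ) then ((s.choose m:ℝ)*(2⁻¹:ℝ)^s) else 0) := by
    rw [← Finset.sum_range_reflect
      (fun m => if ((m:ℝ)) < (s:ℝ)/2 - c then ((s.choose m:ℝ)*(2⁻¹:ℝ)^s) else 0) (s+1)]
    refine Finset.sum_congr rfl fun m hm => ?_
    have hms : m ≤ s := by simpa [Nat.lt_succ_iff] using hm
    have hred : s + 1 - 1 - m = s - m := by omega
    rw [hred]
    have hcast : ((s - m : ℕ):ℝ) = (s:ℝ) - (m:ℝ) := by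
      rw [Nat.cast_sub hms]
    have hch : s.choose (s - m) = s.choose m := Nat.choose_symm hms
    rw [hcast, hch]
    have hiff : ((s:ℝ) - (m:ℝ) < (s:ℝ)/2 - c) ↔ ((s:ℝ)/2 + c < (m:ℝ)) := by
      constructor <;> intro <;> linarith
    rw [if_congr hiff rfl rfl]
  rw [hlo]
  linarith [hup]

lemma key_ineq (s u w q : ℝ) (hq0 : 0 < q) (hq1 : q ≤ 1)
    (hu0 : 0 ≤ u) (hu : u < 1/2) (hw0 : 0 < w) (hwu : w ≤ u)
    (h4s : 4/s ≤ u) (hs0 : 0 < s)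
    (hw2 : u^2 - w^2 = -(2*Real.log q)/s) :
    2*w + 2/s ≤ ((Real.exp (4*q*u) - 1)/q) * (1 - w) := by
  have h1w : (0:ℝ) ≤ 1 - w := by linarith
  rcases le_or_gt (1/2) q with hq2 | hq2
  · have he : (1+2*q*u)^2 ≤ Real.exp (4*q*u) := by
      have h1 : 1 + 2*q*u ≤ Real.exp (2*q*u) := by
        have := Real.add_one_le_exp (2*q*u); linarith
      calc (1+2*q*u)^2 ≤ (Real.exp (2*q*u))^2 := by
            apply pow_le_pow_left₀ (by positivity) h1
        _ = Real.exp (4*q*u) := by rw [sq, ← Real.exp_add]; ring_nf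
    have hβge : 4*u + 4*q*u^2 ≤ (Real.exp (4*q*u) - 1)/q := by
      rw [le_div_iff₀ hq0]; nlinarith [he]
    have e1 : (4*u+2*u^2)*(1-u) ≤ (4*u+4*q*u^2)*(1-w) := by
      apply mul_le_mul (by nlinarith [sq_nonneg u]) (by linarith) (by linarith) (by positivity)
    have e2 : 2*w + 2/s ≤ (4*u+2*u^2)*(1-u) := by
      have h2s : 2/s ≤ u/2 := by
        have h2r : (2:ℝ)/s = (4/s)/2 := by ring
        linarith [h4s]
      nlinarith [h2s, hwu, mul_nonneg hu0 (by linarith : (0:ℝ) ≤ 1/2 - u),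
        mul_nonneg (mul_nonneg hu0 hu0) (by linarith : (0:ℝ) ≤ 1/2 - u)]
    have e3 : (4*u+4*q*u^2)*(1-w) ≤ ((Real.exp (4*q*u) - 1)/q) * (1 - w) :=
      mul_le_mul_of_nonneg_right hβge h1w
    linarith
  · have hβge : 4*u ≤ (Real.exp (4*q*u) - 1)/q := by
      rw [le_div_iff₀ hq0]; nlinarith [Real.add_one_le_exp (4*q*u)]
    have hlogq : Real.log q ≤ -Real.log 2 := by
      have : Real.log q ≤ Real.log (1/2) := Real.log_le_log hq0 hq2.le
      rwa [one_div, Real.log_inv] at this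
    have hlog2 : (0.6931471803:ℝ) < Real.log 2 := Real.log_two_gt_d9
    have hd : 1/s ≤ u - w := by
      have h1 : (u-w)*(u+w) = u^2 - w^2 := by ring
      have h2 : u^2 - w^2 ≥ 1.2/s := by
        rw [hw2]
        rw [ge_iff_le, div_le_div_iff₀ hs0 hs0]
        nlinarith [hlogq, hlog2, hs0]
      have h3 : u + w ≤ 1 := by linarith
      have h4 : 0 ≤ u - w := by linarith
      have h5 : (u-w)*(u+w) ≤ (u-w)*1 := by
        apply mul_le_mul_of_nonneg_left h3 h4
      have h6 : (1:ℝ)/s ≤ 1.2/s := by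
        rw [div_le_div_iff₀ hs0 hs0]; nlinarith
      linarith [h1, h2, h5, h6]
    have e2 : 2*w + 2/s ≤ 4*u*(1-w) := by
      have h4uw : 4*u*w ≤ 4*u*u := mul_le_mul_of_nonneg_left hwu (by positivity)
      have h4u2 : 4*u*u ≤ 2*u := by nlinarith [mul_nonneg hu0 (by linarith : (0:ℝ) ≤ 1/2 - u)]
      have hd2 : 2*(1/s) ≤ 2*(u - w) := by linarith
      have hineq : 2/s = 2*(1/s) := by ring
      nlinarith [hd2, hineq, h4uw, h4u2]
    have e3 : 4*u*(1-w) ≤ ((Real.exp (4*q*u) - 1)/q) * (1 - w) :=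
      mul_le_mul_of_nonneg_right hβge h1w
    linarith

open scoped ENNReal Classical

set_option maxHeartbeats 1000000 in
lemma core_pair (s : ℕ) (del q : ℝ) (hd0 : 0 < del) (hd1 : del < 1)
    (hq0 : 0 < q) (hq1 : q ≤ 1) (hs : 8 * Real.log (4 / del) < (s : ℝ))
    (a b : ℕ) (hab1 : a ≤ b + 1) (hab2 : b ≤ a + 1) (W : Set ℕ) :
    (∑ m ∈ Finset.range (s+1), if a + m ∈ W then ((s.choose m : ℝ≥0∞) * 2⁻¹ ^ s) else 0)
      ≤ ENNReal.ofReal (1 + (Real.exp (q * Real.sqrt (32 * Real.log (4 / del) / s)) - 1) / q) *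
        (∑ m ∈ Finset.range (s+1), if b + m ∈ W then ((s.choose m : ℝ≥0∞) * 2⁻¹ ^ s) else 0)
        + ENNReal.ofReal (del / (2 * q)) := by
  set L := Real.log (4/del) with hL_def
  have hL1 : (1:ℝ) < L := by
    have he9 : Real.exp 1 < 2.7182818286 := Real.exp_one_lt_d9
    have h4 : (4:ℝ) ≤ 4/del := by rw [le_div_iff₀ hd0]; nlinarith
    have h1 : Real.exp 1 < 4/del := by linarith
    calc (1:ℝ) = Real.log (Real.exp 1) := (Real.log_exp 1).symm
      _ < Real.log (4/del) := Real.log_lt_log (Real.exp_pos 1) h1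
  have hs8 : (8:ℝ) < s := by nlinarith
  have hs9 : 9 ≤ s := by
    have h8 : (8:ℕ) < s := by exact_mod_cast hs8
    omega
  have hsr0 : (0:ℝ) < s := by linarith
  set u := Real.sqrt (2*L/s) with hu_def
  have hu0 : 0 ≤ u := Real.sqrt_nonneg _
  have hu2 : u^2 = 2*L/s := Real.sq_sqrt (by positivity)
  have huhalf : u < 1/2 := by
    rw [hu_def, show (1:ℝ)/2 = Real.sqrt ((1/2)^2) from (Real.sqrt_sq (by norm_num)).symm]
    apply Real.sqrt_lt_sqrt (by positivity)
    rw [div_lt_iff₀ hsr0]; nlinarith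
  have hsqrt32 : Real.sqrt (32*L/s) = 4*u := by
    rw [hu_def, show 32*L/s = 4^2*(2*L/s) by ring, Real.sqrt_mul (by positivity),
      Real.sqrt_sq (by norm_num)]
  rw [hsqrt32]
  set β := (Real.exp (q * (4*u)) - 1)/q with hβ_def
  have hβ0 : 0 ≤ β := by
    apply div_nonneg _ hq0.le
    have := Real.add_one_le_exp (q*(4*u))
    nlinarith [mul_nonneg hq0.le (by positivity : (0:ℝ) ≤ 4*u)]
  set f : ℕ → ℝ := fun m => (s.choose m : ℝ) * (2⁻¹:ℝ)^s with hf_def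
  have hf0 : ∀ m, 0 ≤ f m := fun m => by rw [hf_def]; positivity
  have hppf : ∀ m : ℕ, ((s.choose m : ℝ≥0∞) * 2⁻¹ ^ s) = ENNReal.ofReal (f m) := by
    intro m
    rw [hf_def, ENNReal.ofReal_mul (by positivity), ENNReal.ofReal_natCast,
      ENNReal.ofReal_pow (by norm_num)]
    congr 1
    rw [show ((2:ℝ)⁻¹) = 1/2 by norm_num, ENNReal.ofReal_div_of_pos (by norm_num)]
    norm_num
  by_cases hqd : q ≤ del/2
  · have h1 : (∑ m ∈ Finset.range (s+1), if a + m ∈ W then ((s.choose m:ℝ≥0∞) * 2⁻¹^s) else 0)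
        ≤ 1 := by
      calc (∑ m ∈ Finset.range (s+1), if a + m ∈ W then ((s.choose m:ℝ≥0∞) * 2⁻¹^s) else 0)
          ≤ ∑ m ∈ Finset.range (s+1), ((s.choose m:ℝ≥0∞) * 2⁻¹^s) :=
            Finset.sum_le_sum (fun m _ => by split_ifs <;> simp)
        _ = 1 := by
          rw [← Finset.sum_mul, ← Nat.cast_sum, Nat.sum_range_choose,
            show ((2^s : ℕ) : ℝ≥0∞) = 2^s by push_cast; ring, ← mul_pow,
            ENNReal.mul_inv_cancel two_ne_zero ENNReal.ofNat_ne_top, one_pow]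
    have h2 : (1:ℝ≥0∞) ≤ ENNReal.ofReal (del/(2*q)) := by
      rw [← ENNReal.ofReal_one]
      apply ENNReal.ofReal_le_ofReal
      rw [le_div_iff₀ (by positivity)]; linarith
    calc (∑ m ∈ Finset.range (s+1), if a + m ∈ W then ((s.choose m:ℝ≥0∞) * 2⁻¹^s) else 0)
        ≤ ENNReal.ofReal (del/(2*q)) := le_trans h1 h2
      _ ≤ _ := le_add_left (le_refl _)
  · push_neg at hqd
    have hlogq0 : Real.log q ≤ 0 := Real.log_nonpos hq0.le hq1
    have hlogq_lb : 0 < L + Real.log q := by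
      have h1 : Real.log (del/2) < Real.log q := Real.log_lt_log (by positivity) hqd
      have h2 : L + Real.log (del/2) = Real.log 2 := by
        rw [hL_def, ← Real.log_mul (by positivity) (by positivity)]
        congr 1
        field_simp
        ring
      nlinarith [Real.log_pos (by norm_num : (1:ℝ) < 2)]
    set w := Real.sqrt (u^2 + 2*Real.log q/s) with hw_def
    have harg : u^2 + 2*Real.log q/s = (2/s)*(L + Real.log q) := by rw [hu2]; ring
    have hargpos : 0 < u^2 + 2*Real.log q/s := by rw [harg]; positivity
    have hw0 : 0 < w := Real.sqrt_pos.mpr hargpos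
    have hw2 : w^2 = u^2 + 2*Real.log q/s := Real.sq_sqrt hargpos.le
    have hwu : w ≤ u := by
      rw [hw_def, hu_def]
      apply Real.sqrt_le_sqrt
      rw [hu_def] at hu2
      rw [hu2]
      have : 2*Real.log q/s ≤ 0 := by
        apply div_nonpos_of_nonpos_of_nonneg (by linarith) hsr0.le
      linarith
    have h4s : (4:ℝ)/s ≤ u := by
      rw [hu_def, show (4:ℝ)/s = Real.sqrt ((4/s)^2) from (Real.sqrt_sq (by positivity)).symm]
      apply Real.sqrt_le_sqrt
      rw [div_pow, div_le_div_iff₀ (by positivity) hsr0]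
      nlinarith
    have hKEY : 2*w + 2/s ≤ β * (1 - w) := by
      rw [hβ_def, show q*(4*u) = 4*q*u by ring]
      exact key_ineq s u w q hq0 hq1 hu0 huhalf hw0 hwu h4s hsr0 (by rw [hw2]; ring)
    set c := (s:ℝ)*w/2 with hc_def
    have hscpos : 0 < (s:ℝ)/2 - c := by
      rw [hc_def]; nlinarith [hw0, hwu, huhalf, hsr0]
    have hKEY2 : (s:ℝ)/2 + c + 1 ≤ (1+β) * ((s:ℝ)/2 - c) := by
      have hss : (s:ℝ)*(2/s) = 2 := by field_simp
      nlinarith [mul_le_mul_of_nonneg_left hKEY (by positivity : (0:ℝ) ≤ (s:ℝ)/2)]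
    have hchoosepos : ∀ m, m ≤ s → 0 < (s.choose m:ℝ) := fun m hm => by
      exact_mod_cast Nat.choose_pos hm
    have hratio_up : ∀ m : ℕ, (m:ℝ) ≤ (s:ℝ)/2 + c → m + 1 ≤ s ∧ f m ≤ (1+β) * f (m+1) := by
      intro m hm
      have hmsr : (m:ℝ) < s := by nlinarith [hwu, huhalf, hsr0]
      have hmsn : m < s := by exact_mod_cast hmsr
      have hm1s : m + 1 ≤ s := hmsn
      refine ⟨hm1s, ?_⟩
      have hid : (s.choose (m+1) : ℝ) * ((m:ℝ)+1) = (s.choose m:ℝ) * ((s:ℝ) - m) := by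
        have hnat := Nat.choose_succ_right_eq s m
        calc (s.choose (m+1):ℝ) * ((m:ℝ)+1) = ((s.choose (m+1) * (m+1) : ℕ) : ℝ) := by
              push_cast; ring
          _ = ((s.choose m * (s - m) : ℕ):ℝ) := by rw [hnat]
          _ = (s.choose m:ℝ) * ((s:ℝ) - m) := by push_cast [Nat.cast_sub hmsn.le]; ring
      have hmain : (m:ℝ) + 1 ≤ (1+β) * ((s:ℝ) - m) := by
        calc (m:ℝ)+1 ≤ (s:ℝ)/2 + c + 1 := by linarith
          _ ≤ (1+β)*((s:ℝ)/2 - c) := hKEY2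
          _ ≤ (1+β)*((s:ℝ) - m) := by
              apply mul_le_mul_of_nonneg_left (by linarith) (by linarith)
      have hCm : 0 < (s.choose m:ℝ) := hchoosepos m (by omega)
      have hCle : (s.choose m:ℝ) ≤ (1+β)*(s.choose (m+1):ℝ) := by
        have h2 : (s.choose m:ℝ) * ((m:ℝ)+1) ≤ (1+β)*(s.choose (m+1):ℝ) * ((m:ℝ)+1) := by
          calc (s.choose m:ℝ) * ((m:ℝ)+1) ≤ (s.choose m:ℝ) * ((1+β)*((s:ℝ)-m)) :=
                mul_le_mul_of_nonneg_left hmain hCm.le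
            _ = (1+β) * ((s.choose m:ℝ) * ((s:ℝ)-m)) := by ring
            _ = (1+β) * ((s.choose (m+1):ℝ) * ((m:ℝ)+1)) := by rw [← hid]
            _ = (1+β)*(s.choose (m+1):ℝ) * ((m:ℝ)+1) := by ring
        exact le_of_mul_le_mul_right h2 (by positivity)
      rw [hf_def]
      have hpow : (0:ℝ) ≤ (2⁻¹:ℝ)^s := by positivity
      calc (s.choose m:ℝ) * (2⁻¹:ℝ)^s ≤ ((1+β)*(s.choose (m+1):ℝ)) * (2⁻¹:ℝ)^s :=
            mul_le_mul_of_nonneg_right hCle hpow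
        _ = (1+β) * ((s.choose (m+1):ℝ) * (2⁻¹:ℝ)^s) := by ring
    have hratio_dn : ∀ m : ℕ, (s:ℝ)/2 - c ≤ (m:ℝ) → 1 ≤ m ∧ f m ≤ (1+β) * f (m-1) := by
      intro m hm
      have hm0 : 1 ≤ m := by
        rcases Nat.eq_zero_or_pos m with h0 | h1
        · exfalso; rw [h0] at hm; push_cast at hm; linarith
        · exact h1
      refine ⟨hm0, ?_⟩
      by_cases hms : m ≤ s
      · have hid : (s.choose m : ℝ) * (m:ℝ) = (s.choose (m-1):ℝ) * ((s:ℝ) - m + 1) := by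
          have hnat := Nat.choose_succ_right_eq s (m-1)
          have hm1 : m - 1 + 1 = m := by omega
          rw [hm1] at hnat
          calc (s.choose m:ℝ) * (m:ℝ) = ((s.choose m * m : ℕ) : ℝ) := by push_cast; ring
            _ = ((s.choose (m-1) * (s - (m-1)) : ℕ):ℝ) := by rw [hnat]
            _ = (s.choose (m-1):ℝ) * ((s:ℝ) - m + 1) := by
                have : ((s - (m-1) : ℕ):ℝ) = (s:ℝ) - ((m:ℝ) - 1) := by
                  rw [Nat.cast_sub (by omega)]
                  push_cast [Nat.cast_sub hm0]
                  ring
                push_cast [this]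
                ring
        have hmain : (s:ℝ) - m + 1 ≤ (1+β) * (m:ℝ) := by
          calc (s:ℝ) - m + 1 ≤ (s:ℝ)/2 + c + 1 := by linarith
            _ ≤ (1+β)*((s:ℝ)/2 - c) := hKEY2
            _ ≤ (1+β)*(m:ℝ) := by
                apply mul_le_mul_of_nonneg_left (by linarith) (by linarith)
        have hCm1 : 0 < (s.choose (m-1):ℝ) := hchoosepos (m-1) (by omega)
        have hCle : (s.choose m:ℝ) ≤ (1+β)*(s.choose (m-1):ℝ) := by
          have hmr0 : (0:ℝ) < (m:ℝ) := by exact_mod_cast hm0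
          have h2 : (s.choose m:ℝ) * (m:ℝ) ≤ (1+β)*(s.choose (m-1):ℝ) * (m:ℝ) := by
            calc (s.choose m:ℝ) * (m:ℝ) = (s.choose (m-1):ℝ) * ((s:ℝ) - m + 1) := hid
              _ ≤ (s.choose (m-1):ℝ) * ((1+β)*(m:ℝ)) := mul_le_mul_of_nonneg_left hmain hCm1.le
              _ = (1+β)*(s.choose (m-1):ℝ) * (m:ℝ) := by ring
          exact le_of_mul_le_mul_right h2 hmr0
        rw [hf_def]
        have hpow : (0:ℝ) ≤ (2⁻¹:ℝ)^s := by positivity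
        calc (s.choose m:ℝ) * (2⁻¹:ℝ)^s ≤ ((1+β)*(s.choose (m-1):ℝ)) * (2⁻¹:ℝ)^s :=
              mul_le_mul_of_nonneg_right hCle hpow
          _ = (1+β) * ((s.choose (m-1):ℝ) * (2⁻¹:ℝ)^s) := by ring
      · push_neg at hms
        have h0 : f m = 0 := by
          rw [hf_def]
          simp [Nat.choose_eq_zero_of_lt hms]
        rw [h0]
        exact mul_nonneg (by linarith) (hf0 _)
    -- tail bound (ENNReal)
    have htail : (∑ m ∈ Finset.range (s+1),
          if ¬ |(m:ℝ) - (s:ℝ)/2| ≤ c then ENNReal.ofReal (f m) else 0)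
        ≤ ENNReal.ofReal (del/(2*q)) := by
      have ht2 := tail_two s w hw0.le
      have hval : 2 * Real.exp (-((s:ℝ)*w^2/2)) = del/(2*q) := by
        have h1 : (s:ℝ)*w^2/2 = L + Real.log q := by
          rw [hw2, hu2]; field_simp
        rw [h1, Real.exp_neg, Real.exp_add, Real.exp_log hq0, hL_def,
          Real.exp_log (by positivity)]
        rw [mul_inv]
        field_simp
        ring
      have hsum_eq : (∑ m ∈ Finset.range (s+1),
            if ¬ |(m:ℝ) - (s:ℝ)/2| ≤ c then ENNReal.ofReal (f m) else 0)
          = ENNReal.ofReal (∑ m ∈ Finset.range (s+1),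
              if ¬ |(m:ℝ) - (s:ℝ)/2| ≤ c then f m else 0) := by
        rw [ENNReal.ofReal_sum_of_nonneg (fun m _ => by split_ifs <;> first | exact hf0 m | exact le_refl 0)]
        refine Finset.sum_congr rfl fun m _ => ?_
        split_ifs <;> simp
      rw [hsum_eq]
      apply ENNReal.ofReal_le_ofReal
      rw [← hval]
      calc (∑ m ∈ Finset.range (s+1), if ¬ |(m:ℝ) - (s:ℝ)/2| ≤ c then f m else 0)
          = ∑ m ∈ Finset.range (s+1),
            (if ¬ |(m:ℝ) - (s:ℝ)/2| ≤ (s:ℝ)*w/2 then ((s.choose m : ℝ) * (2⁻¹:ℝ)^s) else 0) := by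
            refine Finset.sum_congr rfl fun m _ => ?_
            rw [hc_def, hf_def]
        _ ≤ 2 * Real.exp (-((s:ℝ)*w^2/2)) := ht2
    
    -- main splitting
    have hgoalrw : ∀ (k : ℕ), (∑ m ∈ Finset.range (s+1),
          if k + m ∈ W then ((s.choose m:ℝ≥0∞) * 2⁻¹^s) else 0)
        = ∑ m ∈ Finset.range (s+1), if k + m ∈ W then ENNReal.ofReal (f m) else 0 :=
      fun k => Finset.sum_congr rfl fun m _ => by rw [hppf m]
    rw [hgoalrw a, hgoalrw b]
    set Tb := ∑ m ∈ Finset.range (s+1), if b + m ∈ W then ENNReal.ofReal (f m) else 0 with hTb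
    have hsplit : (∑ m ∈ Finset.range (s+1), if a + m ∈ W then ENNReal.ofReal (f m) else 0)
        ≤ (∑ m ∈ Finset.range (s+1),
            if (a + m ∈ W ∧ |(m:ℝ) - (s:ℝ)/2| ≤ c) then ENNReal.ofReal (f m) else 0)
          + (∑ m ∈ Finset.range (s+1),
            if ¬ |(m:ℝ) - (s:ℝ)/2| ≤ c then ENNReal.ofReal (f m) else 0) := by
      rw [← Finset.sum_add_distrib]
      apply Finset.sum_le_sum
      intro m _
      by_cases h1 : a + m ∈ W <;> by_cases h2 : |(m:ℝ) - (s:ℝ)/2| ≤ c <;> simp [h1, h2]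
    have hcoef1 : (1:ℝ≥0∞) ≤ ENNReal.ofReal (1+β) := by
      rw [← ENNReal.ofReal_one]
      exact ENNReal.ofReal_le_ofReal (by linarith)
    have hlast : ∀ g : ℕ → ℝ≥0∞,
        (∑ m ∈ Finset.range (s+1), if b + m ∈ W then ENNReal.ofReal ((1+β) * f m) else 0)
        = ENNReal.ofReal (1+β) * Tb := by
      intro _
      rw [hTb, Finset.mul_sum]
      refine Finset.sum_congr rfl fun m _ => ?_
      split_ifs with h
      · rw [ENNReal.ofReal_mul (by linarith)]
      · rw [mul_zero]
    have hgood : (∑ m ∈ Finset.range (s+1),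
          if (a + m ∈ W ∧ |(m:ℝ) - (s:ℝ)/2| ≤ c) then ENNReal.ofReal (f m) else 0)
        ≤ ENNReal.ofReal (1+β) * Tb := by
      rcases show a = b ∨ a = b+1 ∨ b = a+1 by omega with hcase | hcase | hcase
      · subst hcase
        calc (∑ m ∈ Finset.range (s+1),
              if (a + m ∈ W ∧ |(m:ℝ) - (s:ℝ)/2| ≤ c) then ENNReal.ofReal (f m) else 0)
            ≤ ∑ m ∈ Finset.range (s+1), if a + m ∈ W then ENNReal.ofReal (f m) else 0 := by
              apply Finset.sum_le_sum
              intro m _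
              by_cases h1 : a + m ∈ W <;> by_cases h2 : |(m:ℝ) - (s:ℝ)/2| ≤ c <;>
                simp [h1, h2]
          _ = Tb := rfl
          _ ≤ ENNReal.ofReal (1+β) * Tb := by
              nth_rewrite 1 [← one_mul Tb]
              exact mul_le_mul_left hcoef1 Tb
      · subst hcase
        have hterm : ∀ m ∈ Finset.range (s+1),
            (if ((b+1) + m ∈ W ∧ |(m:ℝ) - (s:ℝ)/2| ≤ c) then ENNReal.ofReal (f m) else 0)
            ≤ (if m+1 ≤ s then
                (if b+(m+1) ∈ W then ENNReal.ofReal ((1+β) * f (m+1)) else 0) else 0) := by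
          intro m _
          by_cases h : ((b+1) + m ∈ W ∧ |(m:ℝ) - (s:ℝ)/2| ≤ c)
          · obtain ⟨hW, hG⟩ := h
            have hm : (m:ℝ) ≤ (s:ℝ)/2 + c := by
              have h2 := (abs_le.mp hG).2; linarith
            obtain ⟨hm1, hr⟩ := hratio_up m hm
            rw [if_pos ⟨hW, hG⟩, if_pos hm1, if_pos (show b+(m+1) ∈ W by
              have hbm : b+(m+1) = (b+1)+m := by omega
              rw [hbm]; exact hW)]
            exact ENNReal.ofReal_le_ofReal hr
          · rw [if_neg h]; exact zero_le
        calc (∑ m ∈ Finset.range (s+1),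
              if ((b+1) + m ∈ W ∧ |(m:ℝ) - (s:ℝ)/2| ≤ c) then ENNReal.ofReal (f m) else 0)
            ≤ ∑ m ∈ Finset.range (s+1), (if m+1 ≤ s then
                (if b+(m+1) ∈ W then ENNReal.ofReal ((1+β) * f (m+1)) else 0) else 0) :=
              Finset.sum_le_sum hterm
          _ = ∑ m ∈ Finset.range s,
                (if b+(m+1) ∈ W then ENNReal.ofReal ((1+β) * f (m+1)) else 0) := by
              rw [Finset.sum_range_succ]
              rw [if_neg (show ¬ (s+1 ≤ s) by omega), add_zero]
              exact Finset.sum_congr rfl fun m hm => by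
                rw [if_pos (show m+1 ≤ s from Finset.mem_range.mp hm)]
          _ ≤ ∑ m ∈ Finset.range (s+1),
                (if b+m ∈ W then ENNReal.ofReal ((1+β) * f m) else 0) := by
              rw [Finset.sum_range_succ'
                (fun m => if b+m ∈ W then ENNReal.ofReal ((1+β) * f m) else 0) s]
              exact le_self_add
          _ = ENNReal.ofReal (1+β) * Tb := hlast (fun _ => 0)
      · subst hcase
        have hterm : ∀ m ∈ Finset.range (s+1),
            (if (a + m ∈ W ∧ |(m:ℝ) - (s:ℝ)/2| ≤ c) then ENNReal.ofReal (f m) else 0)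
            ≤ (if 1 ≤ m then
                (if (a+1)+(m-1) ∈ W then ENNReal.ofReal ((1+β) * f (m-1)) else 0) else 0) := by
          intro m _
          by_cases h : (a + m ∈ W ∧ |(m:ℝ) - (s:ℝ)/2| ≤ c)
          · obtain ⟨hW, hG⟩ := h
            have hm : (s:ℝ)/2 - c ≤ (m:ℝ) := by
              have h2 := (abs_le.mp hG).1; linarith
            obtain ⟨hm1, hr⟩ := hratio_dn m hm
            rw [if_pos ⟨hW, hG⟩, if_pos hm1, if_pos (show (a+1)+(m-1) ∈ W by
              have hbm : (a+1)+(m-1) = a+m := by omega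
              rw [hbm]; exact hW)]
            exact ENNReal.ofReal_le_ofReal hr
          · rw [if_neg h]; exact zero_le
        calc (∑ m ∈ Finset.range (s+1),
              if (a + m ∈ W ∧ |(m:ℝ) - (s:ℝ)/2| ≤ c) then ENNReal.ofReal (f m) else 0)
            ≤ ∑ m ∈ Finset.range (s+1), (if 1 ≤ m then
                (if (a+1)+(m-1) ∈ W then ENNReal.ofReal ((1+β) * f (m-1)) else 0) else 0) :=
              Finset.sum_le_sum hterm
          _ = ∑ m ∈ Finset.range s,
                (if (a+1)+m ∈ W then ENNReal.ofReal ((1+β) * f m) else 0) := by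
              rw [Finset.sum_range_succ'
                (fun m => if 1 ≤ m then
                  (if (a+1)+(m-1) ∈ W then ENNReal.ofReal ((1+β) * f (m-1)) else 0) else 0) s]
              rw [if_neg (show ¬ (1 ≤ 0) by omega), add_zero]
              exact Finset.sum_congr rfl fun m _ => by
                rw [if_pos (show 1 ≤ m+1 by omega)]
                simp only [Nat.add_sub_cancel]
          _ ≤ ∑ m ∈ Finset.range (s+1),
                (if (a+1)+m ∈ W then ENNReal.ofReal ((1+β) * f m) else 0) :=
              Finset.sum_le_sum_of_subset (Finset.range_subset_range.mpr (by omega))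
          _ = ENNReal.ofReal (1+β) * Tb := hlast (fun _ => 0)
    calc (∑ m ∈ Finset.range (s+1), if a + m ∈ W then ENNReal.ofReal (f m) else 0)
        ≤ (∑ m ∈ Finset.range (s+1),
            if (a + m ∈ W ∧ |(m:ℝ) - (s:ℝ)/2| ≤ c) then ENNReal.ofReal (f m) else 0)
          + (∑ m ∈ Finset.range (s+1),
            if ¬ |(m:ℝ) - (s:ℝ)/2| ≤ c then ENNReal.ofReal (f m) else 0) := hsplit
      _ ≤ ENNReal.ofReal (1+β) * Tb + ENNReal.ofReal (del/(2*q)) := add_le_add hgood htail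

open Finset in
lemma CH_toOM (n : ℕ) (s : ℕ) (H : Finset (Fin n)) (hH : H.card = s) (y : Fin n → Bool)
    (W : Set ℕ) :
    (CH n H y).toOuterMeasure W
      = ∑ m ∈ Finset.range (s+1),
          if sumOutside H y + m ∈ W then ((s.choose m : ℝ≥0∞) * 2⁻¹ ^ s) else 0 := by
  subst hH
  unfold CH binom
  rw [PMF.toOuterMeasure_map_apply, PMF.toOuterMeasure_map_apply, PMF.toOuterMeasure_apply,
    tsum_fintype]
  rw [← Fin.sum_univ_eq_sum_range (fun m =>
    if sumOutside H y + m ∈ W then ((H.card.choose m : ℝ≥0∞) * 2⁻¹ ^ H.card) else 0) (H.card+1)]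
  refine Finset.sum_congr rfl fun k _ => ?_
  by_cases hk : sumOutside H y + (k:ℕ) ∈ W
  · have hmem : k ∈ Fin.val ⁻¹' ((fun B => sumOutside H y + B) ⁻¹' W) := hk
    have h2 : (2⁻¹ : ℝ≥0∞).toNNReal = 2⁻¹ := by
      rw [ENNReal.toNNReal_inv, ← ENNReal.coe_ofNat, ENNReal.toNNReal_coe]
    have h3 : (1 : NNReal) - 2⁻¹ = 2⁻¹ := by
      rw [← ENNReal.coe_inj, ENNReal.coe_sub, ENNReal.coe_inv_two, ENNReal.coe_one,
        ENNReal.one_sub_inv_two]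
    rw [Set.indicator_of_mem hmem, if_pos hk]
    refine (PMF.binomial_apply _ _ _ k).trans ?_
    rw [h2, ENNReal.coe_inv_two, ENNReal.one_sub_inv_two]
    rw [Fin.val_last, ← pow_add, Nat.add_sub_cancel' (Nat.lt_succ_iff.mp k.isLt), mul_comm]
  · have hmem : k ∉ Fin.val ⁻¹' ((fun B => sumOutside H y + B) ⁻¹' W) := hk
    rw [Set.indicator_of_notMem hmem, if_neg hk]

open Finset in
lemma Cs_toOM (n s : ℕ) (hsn : s ≤ n) (y : Fin n → Bool) (W : Set ℕ) :
    (Cs n s y).toOuterMeasure W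
      = ∑ H ∈ Finset.powersetCard s (Finset.univ : Finset (Fin n)),
          ((Finset.powersetCard s (Finset.univ : Finset (Fin n))).card : ℝ≥0∞)⁻¹ *
            (CH n H y).toOuterMeasure W := by
  have hne : (Finset.powersetCard s (Finset.univ : Finset (Fin n))).Nonempty := by
    obtain ⟨t, hts, hcard⟩ := Finset.exists_subset_card_eq
      (show s ≤ (Finset.univ : Finset (Fin n)).card by simpa using hsn)
    exact ⟨t, Finset.mem_powersetCard.mpr ⟨hts, hcard⟩⟩
  unfold Cs uniformSubset
  rw [dif_pos hne, PMF.toOuterMeasure_bind_apply, tsum_fintype]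
  calc ∑ H : Finset (Fin n), (PMF.uniformOfFinset _ hne) H * (CH n H y).toOuterMeasure W
      = ∑ H ∈ (Finset.univ : Finset (Finset (Fin n))),
          (if H ∈ Finset.powersetCard s (Finset.univ : Finset (Fin n)) then
            ((Finset.powersetCard s (Finset.univ : Finset (Fin n))).card : ℝ≥0∞)⁻¹ *
              (CH n H y).toOuterMeasure W else 0) := by
        refine Finset.sum_congr rfl fun H _ => ?_
        rw [PMF.uniformOfFinset_apply]
        split_ifs <;> simp
    _ = _ := by
        rw [Finset.sum_ite_mem, Finset.univ_inter]

lemma sumOutside_congr {n : ℕ} (j : Fin n) (x x' : Fin n → Bool)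
    (hx : ∀ i, i ≠ j → x i = x' i) (H : Finset (Fin n)) (hj : j ∈ H) :
    sumOutside H x = sumOutside H x' := by
  unfold sumOutside
  refine Finset.sum_congr rfl fun i hi => ?_
  have hij : i ≠ j := fun h => (Finset.mem_compl.mp hi) (h ▸ hj)
  rw [hx i hij]

lemma sumOutside_close {n : ℕ} (j : Fin n) (x x' : Fin n → Bool)
    (hx : ∀ i, i ≠ j → x i = x' i) (H : Finset (Fin n)) (hj : j ∉ H) :
    sumOutside H x ≤ sumOutside H x' + 1 ∧ sumOutside H x' ≤ sumOutside H x + 1 := by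
  have hjc : j ∈ Hᶜ := Finset.mem_compl.mpr hj
  have hsx : sumOutside H x
      = (if x j then 1 else 0) + ∑ i ∈ Hᶜ.erase j, (if x i then 1 else 0) :=
    (Finset.add_sum_erase _ _ hjc).symm
  have hsx' : sumOutside H x'
      = (if x' j then 1 else 0) + ∑ i ∈ Hᶜ.erase j, (if x' i then 1 else 0) :=
    (Finset.add_sum_erase _ _ hjc).symm
  have hS : ∑ i ∈ Hᶜ.erase j, (if x i then 1 else 0)
      = ∑ i ∈ Hᶜ.erase j, (if x' i then 1 else 0) :=
    Finset.sum_congr rfl fun i hi => by rw [hx i (Finset.ne_of_mem_erase hi)]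
  rw [hsx, hsx', hS]
  constructor <;> split_ifs <;> omega

lemma pair_facts {n : ℕ} (j m : Fin n) (H : Finset (Fin n)) (hjH : j ∉ H) (hm : m ∈ H)
    (x x' : Fin n → Bool) (hx : ∀ i, i ≠ j → x i = x' i) :
    (insert j (H.erase m)).card = H.card ∧
    sumOutside H x ≤ sumOutside (insert j (H.erase m)) x' + 1 ∧
    sumOutside (insert j (H.erase m)) x' ≤ sumOutside H x + 1 := by
  have hmj : m ≠ j := fun h => hjH (h ▸ hm)
  have hjE : j ∉ H.erase m := fun hc => hjH (Finset.mem_of_mem_erase hc)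
  have hcard : (insert j (H.erase m)).card = H.card := by
    rw [Finset.card_insert_of_notMem hjE, Finset.card_erase_of_mem hm]
    have : 0 < H.card := Finset.card_pos.mpr ⟨m, hm⟩
    omega
  have hcompl : (insert j (H.erase m))ᶜ = insert m (Hᶜ.erase j) := by
    ext i
    by_cases him : i = m <;> by_cases hij : i = j <;>
      simp_all [Finset.mem_compl, Finset.mem_insert, Finset.mem_erase]
  have hjc : j ∈ Hᶜ := Finset.mem_compl.mpr hjH
  have hmc : m ∉ Hᶜ.erase j := fun hc => (Finset.mem_compl.mp (Finset.mem_of_mem_erase hc)) hm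
  have hsx : sumOutside H x
      = (if x j then 1 else 0) + ∑ i ∈ Hᶜ.erase j, (if x i then 1 else 0) :=
    (Finset.add_sum_erase _ _ hjc).symm
  have hsx' : sumOutside (insert j (H.erase m)) x'
      = (if x' m then 1 else 0) + ∑ i ∈ Hᶜ.erase j, (if x' i then 1 else 0) := by
    unfold sumOutside
    rw [hcompl, Finset.sum_insert hmc]
  have hS : ∑ i ∈ Hᶜ.erase j, (if x i then 1 else 0)
      = ∑ i ∈ Hᶜ.erase j, (if x' i then 1 else 0) :=
    Finset.sum_congr rfl fun i hi => by rw [hx i (Finset.ne_of_mem_erase hi)]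
  refine ⟨hcard, ?_⟩
  rw [hsx, hsx', hS]
  constructor <;> split_ifs <;> omega

open Finset in
lemma reindex_pairs (n s : ℕ) (j : Fin n) (G : Finset (Fin n) → ℝ≥0∞) :
    ∑ H ∈ (Finset.powersetCard s (Finset.univ : Finset (Fin n))).filter (fun H => j ∉ H),
      ∑ m ∈ H, G (insert j (H.erase m))
    = ∑ H' ∈ (Finset.powersetCard s (Finset.univ : Finset (Fin n))).filter (fun H => j ∈ H),
      ∑ i ∈ H'ᶜ, G H' := by
  rw [Finset.sum_sigma', Finset.sum_sigma']
  refine Finset.sum_nbij' (i := fun p => (⟨insert j (p.1.erase p.2), p.2⟩ : Σ _ : Finset (Fin n), Fin n))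
    (j := fun p => (⟨insert p.2 (p.1.erase j), p.2⟩ : Σ _ : Finset (Fin n), Fin n))
    ?_ ?_ ?_ ?_ ?_
  · rintro ⟨H, m⟩ hp
    rw [Finset.mem_sigma] at hp
    obtain ⟨hH, hm⟩ := hp
    rw [Finset.mem_filter, Finset.mem_powersetCard] at hH
    obtain ⟨⟨-, hcard⟩, hjH⟩ := hH
    dsimp only at hm hjH hcard ⊢
    have hmj : m ≠ j := fun h => hjH (h ▸ hm)
    have hjE : j ∉ H.erase m := fun hc => hjH (Finset.mem_of_mem_erase hc)
    rw [Finset.mem_sigma, Finset.mem_filter, Finset.mem_powersetCard]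
    refine ⟨⟨⟨Finset.subset_univ _, ?_⟩, Finset.mem_insert_self _ _⟩, ?_⟩
    · rw [Finset.card_insert_of_notMem hjE, Finset.card_erase_of_mem hm]
      have : 0 < H.card := Finset.card_pos.mpr ⟨m, hm⟩
      omega
    · rw [Finset.mem_compl, Finset.mem_insert]
      rintro (h | h)
      · exact hmj h
      · exact (Finset.notMem_erase m H) h
  · rintro ⟨H', i⟩ hp
    rw [Finset.mem_sigma] at hp
    obtain ⟨hH, hi⟩ := hp
    rw [Finset.mem_filter, Finset.mem_powersetCard] at hH
    obtain ⟨⟨-, hcard⟩, hjH⟩ := hH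
    dsimp only at hi hjH hcard ⊢
    rw [Finset.mem_compl] at hi
    have hij : i ≠ j := fun h => hi (h ▸ hjH)
    have hiE : i ∉ H'.erase j := fun hc => hi (Finset.mem_of_mem_erase hc)
    rw [Finset.mem_sigma, Finset.mem_filter, Finset.mem_powersetCard]
    refine ⟨⟨⟨Finset.subset_univ _, ?_⟩, ?_⟩, Finset.mem_insert_self _ _⟩
    · rw [Finset.card_insert_of_notMem hiE, Finset.card_erase_of_mem hjH]
      have : 0 < H'.card := Finset.card_pos.mpr ⟨j, hjH⟩
      omega
    · rw [Finset.mem_insert]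
      rintro (h | h)
      · exact hij h.symm
      · exact (Finset.notMem_erase j H') h
  · rintro ⟨H, m⟩ hp
    rw [Finset.mem_sigma] at hp
    obtain ⟨hH, hm⟩ := hp
    rw [Finset.mem_filter, Finset.mem_powersetCard] at hH
    obtain ⟨⟨-, hcard⟩, hjH⟩ := hH
    have hjE : j ∉ H.erase m := fun hc => hjH (Finset.mem_of_mem_erase hc)
    have : (insert j (H.erase m)).erase j = H.erase m := Finset.erase_insert hjE
    simp only [Sigma.mk.inj_iff, heq_eq_eq, and_true]
    rw [this, Finset.insert_erase hm]
  · rintro ⟨H', i⟩ hp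
    rw [Finset.mem_sigma] at hp
    obtain ⟨hH, hi⟩ := hp
    rw [Finset.mem_filter, Finset.mem_powersetCard] at hH
    obtain ⟨⟨-, hcard⟩, hjH⟩ := hH
    rw [Finset.mem_compl] at hi
    have hiE : i ∉ H'.erase j := fun hc => hi (Finset.mem_of_mem_erase hc)
    have : (insert i (H'.erase j)).erase i = H'.erase j := Finset.erase_insert hiE
    simp only [Sigma.mk.inj_iff, heq_eq_eq, and_true]
    rw [this, Finset.insert_erase hjH]
  · rintro ⟨H, m⟩ _
    rfl

open Finset in
/-- for `8 ln(4/δ) < s ≤ n`, the mechanism `C_s` is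
`(√(32 ln(4/δ)/s) · (1 - s/n), δ/2)`-DP. -/
theorem stmt4 (n : ℕ) (del : ℝ) (hdel : del ∈ Set.Ioo (0 : ℝ) 1) (s : ℕ)
    (hs1 : 8 * Real.log (4 / del) < (s : ℝ)) (hs2 : s ≤ n) :
    ∀ x x' : Fin n → Bool, Neighbor x x' → ∀ W : Set ℕ,
      (Cs n s x).toOuterMeasure W ≤
        ENNReal.ofReal
            (Real.exp (Real.sqrt (32 * Real.log (4 / del) / s) * (1 - (s : ℝ) / n))) *
          (Cs n s x').toOuterMeasure W + ENNReal.ofReal (del / 2) := by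
  obtain ⟨hdel0, hdel1⟩ := hdel
  intro x x' hnb W
  obtain ⟨j, hj⟩ := hnb
  have hL1 : (1:ℝ) < Real.log (4/del) := by
    have he9 : Real.exp 1 < 2.7182818286 := Real.exp_one_lt_d9
    have h4 : (4:ℝ) ≤ 4/del := by rw [le_div_iff₀ hdel0]; nlinarith
    calc (1:ℝ) = Real.log (Real.exp 1) := (Real.log_exp 1).symm
      _ < Real.log (4/del) := Real.log_lt_log (Real.exp_pos 1) (by linarith)
  have hs8 : (8:ℝ) < s := by nlinarith
  have hs9 : 9 ≤ s := by
    have h8 : (8:ℕ) < s := by exact_mod_cast hs8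
    omega
  have hn0 : 0 < n := by omega
  have hnr : (0:ℝ) < n := by exact_mod_cast hn0
  have hsr0 : (0:ℝ) < s := by linarith
  set PP := Finset.powersetCard s (Finset.univ : Finset (Fin n)) with hP_def
  set P1 := PP.filter (fun H => j ∈ H) with hP1_def
  set P0 := PP.filter (fun H => j ∉ H) with hP0_def
  have hx := Cs_toOM n s hs2 x W
  have hx' := Cs_toOM n s hs2 x' W
  have hcardmem : ∀ H ∈ PP, H.card = s := fun H hH => (Finset.mem_powersetCard.mp hH).2
  have hsplitsum : ∀ y : Fin n → Bool,
      ∑ H ∈ PP, ((PP.card : ℝ≥0∞))⁻¹ * (CH n H y).toOuterMeasure W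
      = ((PP.card : ℝ≥0∞))⁻¹ *
        ((∑ H ∈ P1, (CH n H y).toOuterMeasure W) + ∑ H ∈ P0, (CH n H y).toOuterMeasure W) := by
    intro y
    rw [← Finset.mul_sum, Finset.sum_filter_add_sum_filter_not PP (fun H => j ∈ H)]
  have hP1eq : ∑ H ∈ P1, (CH n H x).toOuterMeasure W
      = ∑ H ∈ P1, (CH n H x').toOuterMeasure W := by
    refine Finset.sum_congr rfl fun H hH => ?_
    have hjH : j ∈ H := (Finset.mem_filter.mp hH).2
    unfold CH
    rw [sumOutside_congr j x x' hj H hjH]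
  rw [hx, hx', hsplitsum x, hsplitsum x', hP1eq]
  by_cases hsn : s = n
  · have hP0eq : ∑ H ∈ P0, (CH n H x).toOuterMeasure W
        = ∑ H ∈ P0, (CH n H x').toOuterMeasure W := by
      refine Finset.sum_congr rfl fun H hH => ?_
      rw [Finset.mem_filter] at hH
      exfalso
      apply hH.2
      have huniv : H = Finset.univ := by
        apply Finset.eq_univ_of_card
        rw [hcardmem H hH.1, hsn, Fintype.card_fin]
      rw [huniv]
      exact Finset.mem_univ j
    rw [hP0eq]
    have hε : 0 ≤ Real.sqrt (32*Real.log (4/del)/s) * (1 - (s:ℝ)/n) := by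
      apply mul_nonneg (Real.sqrt_nonneg _)
      have h1 : (s:ℝ)/n ≤ 1 := by
        rw [div_le_one hnr]; exact_mod_cast hs2
      linarith
    have h1 : (1:ℝ≥0∞) ≤ ENNReal.ofReal
        (Real.exp (Real.sqrt (32*Real.log (4/del)/s) * (1 - (s:ℝ)/n))) := by
      rw [← ENNReal.ofReal_one]
      apply ENNReal.ofReal_le_ofReal
      calc (1:ℝ) = Real.exp 0 := Real.exp_zero.symm
        _ ≤ _ := Real.exp_le_exp.mpr hε
    calc ((PP.card:ℝ≥0∞))⁻¹ * ((∑ H ∈ P1, (CH n H x').toOuterMeasure W)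
            + ∑ H ∈ P0, (CH n H x').toOuterMeasure W)
        = 1 * (((PP.card:ℝ≥0∞))⁻¹ * ((∑ H ∈ P1, (CH n H x').toOuterMeasure W)
            + ∑ H ∈ P0, (CH n H x').toOuterMeasure W)) := (one_mul _).symm
      _ ≤ ENNReal.ofReal (Real.exp (Real.sqrt (32*Real.log (4/del)/s) * (1 - (s:ℝ)/n))) *
            (((PP.card:ℝ≥0∞))⁻¹ * ((∑ H ∈ P1, (CH n H x').toOuterMeasure W)
            + ∑ H ∈ P0, (CH n H x').toOuterMeasure W)) := mul_le_mul_left h1 _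
      _ ≤ _ := le_self_add
  · -- main case s < n
    have hsltn : s < n := lt_of_le_of_ne hs2 hsn
    have hsnr : (s:ℝ) < n := by exact_mod_cast hsltn
    set q : ℝ := ((n:ℝ) - s)/n with hq_def
    have hq0 : 0 < q := by rw [hq_def]; apply div_pos (by linarith) hnr
    have hq1 : q ≤ 1 := by
      rw [hq_def, div_le_one hnr]
      linarith
    set ε0 := Real.sqrt (32*Real.log (4/del)/s) with hε0_def
    set β := (Real.exp (q*ε0) - 1)/q with hβ_def
    have hqε0 : 0 ≤ q*ε0 := mul_nonneg hq0.le (Real.sqrt_nonneg _)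
    have hβ0 : 0 ≤ β := by
      apply div_nonneg _ hq0.le
      have := Real.add_one_le_exp (q*ε0)
      linarith
    have hqβ0 : 0 ≤ q*β := mul_nonneg hq0.le hβ0
    have hexp_eq : Real.exp (ε0 * (1 - (s:ℝ)/n)) = 1 + q*β := by
      have h1 : 1 - (s:ℝ)/n = q := by rw [hq_def]; field_simp
      rw [h1, hβ_def, show ε0*q = q*ε0 by ring]
      field_simp
      ring
    have hcore : ∀ (aa bb : ℕ), aa ≤ bb + 1 → bb ≤ aa + 1 →
        (∑ m ∈ Finset.range (s+1), if aa + m ∈ W then ((s.choose m : ℝ≥0∞) * 2⁻¹ ^ s) else 0)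
        ≤ ENNReal.ofReal (1+β) *
            (∑ m ∈ Finset.range (s+1), if bb + m ∈ W then ((s.choose m : ℝ≥0∞) * 2⁻¹ ^ s) else 0)
          + ENNReal.ofReal (del/(2*q)) := by
      intro aa bb h1 h2
      have hc := core_pair s del q hdel0 hdel1 hq0 hq1 hs1 aa bb h1 h2 W
      rw [hβ_def, hε0_def]
      exact hc
    set ED := ENNReal.ofReal (del/(2*q)) with hED_def
    have hclaim1 : ∑ H ∈ P0, (CH n H x).toOuterMeasure W
        ≤ ENNReal.ofReal (1+β) * (∑ H ∈ P0, (CH n H x').toOuterMeasure W)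
          + (P0.card : ℝ≥0∞) * ED := by
      calc ∑ H ∈ P0, (CH n H x).toOuterMeasure W
          ≤ ∑ H ∈ P0, (ENNReal.ofReal (1+β) * (CH n H x').toOuterMeasure W + ED) := by
            apply Finset.sum_le_sum
            intro H hH
            rw [Finset.mem_filter] at hH
            obtain ⟨hHP, hjH⟩ := hH
            have hcard : H.card = s := hcardmem H hHP
            obtain ⟨h1, h2⟩ := sumOutside_close j x x' hj H hjH
            rw [CH_toOM n s H hcard x W, CH_toOM n s H hcard x' W]
            exact hcore _ _ h1 h2
        _ = _ := by
            rw [Finset.sum_add_distrib, ← Finset.mul_sum, Finset.sum_const, nsmul_eq_mul]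
    have hclaim2 : (s:ℝ≥0∞) * (∑ H ∈ P0, (CH n H x).toOuterMeasure W)
        ≤ ENNReal.ofReal (1+β) *
            (((n - s:ℕ):ℝ≥0∞) * ∑ H ∈ P1, (CH n H x').toOuterMeasure W)
          + (s:ℝ≥0∞) * (P0.card:ℝ≥0∞) * ED := by
      have hstep4 := reindex_pairs n s j (fun H => (CH n H x').toOuterMeasure W)
      calc (s:ℝ≥0∞) * (∑ H ∈ P0, (CH n H x).toOuterMeasure W)
          = ∑ H ∈ P0, ∑ _m ∈ H, (CH n H x).toOuterMeasure W := by
            rw [Finset.mul_sum]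
            refine Finset.sum_congr rfl fun H hH => ?_
            rw [Finset.sum_const, nsmul_eq_mul, hcardmem H (Finset.mem_filter.mp hH).1]
        _ ≤ ∑ H ∈ P0, ∑ m ∈ H,
              (ENNReal.ofReal (1+β) * (CH n (insert j (H.erase m)) x').toOuterMeasure W
                + ED) := by
            apply Finset.sum_le_sum
            intro H hH
            apply Finset.sum_le_sum
            intro m hm
            rw [Finset.mem_filter] at hH
            obtain ⟨hHP, hjH⟩ := hH
            have hcard : H.card = s := hcardmem H hHP
            obtain ⟨hc, h1, h2⟩ := pair_facts j m H hjH hm x x' hj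
            have hcard' : (insert j (H.erase m)).card = s := by rw [hc, hcard]
            rw [CH_toOM n s H hcard x W, CH_toOM n s _ hcard' x' W]
            exact hcore _ _ h1 h2
        _ = ENNReal.ofReal (1+β) *
              (∑ H ∈ P0, ∑ m ∈ H, (CH n (insert j (H.erase m)) x').toOuterMeasure W)
            + (s:ℝ≥0∞) * (P0.card:ℝ≥0∞) * ED := by
            calc ∑ H ∈ P0, ∑ m ∈ H,
                  (ENNReal.ofReal (1+β) * (CH n (insert j (H.erase m)) x').toOuterMeasure W + ED)
                = ∑ H ∈ P0, (ENNReal.ofReal (1+β) *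
                    (∑ m ∈ H, (CH n (insert j (H.erase m)) x').toOuterMeasure W)
                    + (s:ℝ≥0∞) * ED) := by
                  refine Finset.sum_congr rfl fun H hH => ?_
                  rw [Finset.sum_add_distrib, ← Finset.mul_sum, Finset.sum_const, nsmul_eq_mul,
                    hcardmem H (Finset.mem_filter.mp hH).1]
              _ = _ := by
                  rw [Finset.sum_add_distrib, ← Finset.mul_sum, Finset.sum_const, nsmul_eq_mul]
                  ring
        _ = ENNReal.ofReal (1+β) *
              (∑ H ∈ P1, ∑ _i ∈ Hᶜ, (CH n H x').toOuterMeasure W)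
            + (s:ℝ≥0∞) * (P0.card:ℝ≥0∞) * ED := by
            rw [hstep4]
        _ = _ := by
            congr 1
            congr 1
            rw [Finset.mul_sum]
            refine Finset.sum_congr rfl fun H hH => ?_
            rw [Finset.sum_const, nsmul_eq_mul, Finset.card_compl, Fintype.card_fin,
              hcardmem H (Finset.mem_filter.mp hH).1]
    set A := ∑ H ∈ P1, (CH n H x').toOuterMeasure W with hA_def
    set B := ∑ H ∈ P0, (CH n H x).toOuterMeasure W with hB_def
    set B' := ∑ H ∈ P0, (CH n H x').toOuterMeasure W with hB'_def
    set α : ℝ := ((s:ℝ)/n) * (β/(1+β)) with hα_def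
    have hβ1 : (0:ℝ) < 1+β := by linarith
    have hα0 : 0 ≤ α := by
      apply mul_nonneg (by positivity) (div_nonneg hβ0 hβ1.le)
    have hα1 : α ≤ 1 := by
      have h1 : (s:ℝ)/n ≤ 1 := by rw [div_le_one hnr]; exact_mod_cast hs2
      have h2 : β/(1+β) ≤ 1 := by rw [div_le_one hβ1]; linarith
      calc α ≤ 1 * 1 := mul_le_mul h1 h2 (div_nonneg hβ0 hβ1.le) zero_le_one
        _ = 1 := mul_one 1
    have hid1 : (α/(s:ℝ)) * (1+β) * ((n:ℝ)-s) = q*β := by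
      rw [hα_def, hq_def]
      field_simp
    have hid2 : (1-α)*(1+β) = 1 + q*β := by
      rw [hα_def, hq_def]
      field_simp
      ring
    have hαsplit : ENNReal.ofReal α = ENNReal.ofReal (α/(s:ℝ)) * (s:ℝ≥0∞) := by
      rw [← ENNReal.ofReal_natCast s, ← ENNReal.ofReal_mul (div_nonneg hα0 hsr0.le)]
      congr 1
      field_simp
    have hone : ENNReal.ofReal (1-α) + ENNReal.ofReal α = 1 := by
      rw [← ENNReal.ofReal_add (by linarith) hα0]
      norm_num
    have hnscast : ((n-s:ℕ):ℝ≥0∞) = ENNReal.ofReal ((n:ℝ)-s) := by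
      rw [← ENNReal.ofReal_natCast (n-s)]
      congr 1
      push_cast [Nat.cast_sub hs2]
      ring
    have t1 : ENNReal.ofReal (1-α) * B
        ≤ ENNReal.ofReal (1+q*β) * B' + ENNReal.ofReal (1-α) * ((P0.card:ℝ≥0∞) * ED) := by
      calc ENNReal.ofReal (1-α) * B
          ≤ ENNReal.ofReal (1-α) * (ENNReal.ofReal (1+β) * B' + (P0.card:ℝ≥0∞) * ED) :=
            mul_le_mul_right hclaim1 _
        _ = (ENNReal.ofReal (1-α) * ENNReal.ofReal (1+β)) * B'
            + ENNReal.ofReal (1-α) * ((P0.card:ℝ≥0∞) * ED) := by ring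
        _ = ENNReal.ofReal (1+q*β) * B' + ENNReal.ofReal (1-α) * ((P0.card:ℝ≥0∞) * ED) := by
            rw [← ENNReal.ofReal_mul (by linarith), hid2]
    have t2 : ENNReal.ofReal α * B
        ≤ ENNReal.ofReal (q*β) * A + ENNReal.ofReal α * ((P0.card:ℝ≥0∞) * ED) := by
      calc ENNReal.ofReal α * B = ENNReal.ofReal (α/(s:ℝ)) * ((s:ℝ≥0∞) * B) := by
            rw [hαsplit]; ring
        _ ≤ ENNReal.ofReal (α/(s:ℝ)) * (ENNReal.ofReal (1+β) * (((n-s:ℕ):ℝ≥0∞) * A)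
              + (s:ℝ≥0∞) * (P0.card:ℝ≥0∞) * ED) := mul_le_mul_right hclaim2 _
        _ = (ENNReal.ofReal (α/(s:ℝ)) * ENNReal.ofReal (1+β) * ((n-s:ℕ):ℝ≥0∞)) * A
            + (ENNReal.ofReal (α/(s:ℝ)) * (s:ℝ≥0∞)) * ((P0.card:ℝ≥0∞) * ED) := by ring
        _ = ENNReal.ofReal ((α/(s:ℝ)) * (1+β) * ((n:ℝ)-s)) * A
            + ENNReal.ofReal α * ((P0.card:ℝ≥0∞) * ED) := by
            rw [hnscast, ← ENNReal.ofReal_mul (div_nonneg hα0 hsr0.le),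
              ← ENNReal.ofReal_mul (mul_nonneg (div_nonneg hα0 hsr0.le) (by linarith)),
              ← hαsplit]
        _ = ENNReal.ofReal (q*β) * A + ENNReal.ofReal α * ((P0.card:ℝ≥0∞) * ED) := by
            rw [hid1]
    have hmain : A + B ≤ ENNReal.ofReal (1+q*β) * (A + B') + (P0.card:ℝ≥0∞) * ED := by
      have hBsplit : B = ENNReal.ofReal (1-α) * B + ENNReal.ofReal α * B := by
        rw [← add_mul, hone, one_mul]
      calc A + B
          ≤ A + ((ENNReal.ofReal (1+q*β) * B' + ENNReal.ofReal (1-α) * ((P0.card:ℝ≥0∞) * ED))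
            + (ENNReal.ofReal (q*β) * A + ENNReal.ofReal α * ((P0.card:ℝ≥0∞) * ED))) := by
            nth_rewrite 1 [hBsplit]
            exact add_le_add_right (add_le_add t1 t2) A
        _ = (1 + ENNReal.ofReal (q*β)) * A + ENNReal.ofReal (1+q*β) * B'
            + (ENNReal.ofReal (1-α) + ENNReal.ofReal α) * ((P0.card:ℝ≥0∞) * ED) := by ring
        _ = ENNReal.ofReal (1+q*β) * (A + B') + (P0.card:ℝ≥0∞) * ED := by
            rw [hone, one_mul,
              show (1:ℝ≥0∞) + ENNReal.ofReal (q*β) = ENNReal.ofReal (1+q*β) from by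
                rw [← ENNReal.ofReal_one, ← ENNReal.ofReal_add zero_le_one hqβ0]]
            ring
    have hPcard : PP.card = n.choose s := by
      rw [hP_def, Finset.card_powersetCard, Finset.card_univ, Fintype.card_fin]
    have hP0card : P0.card = (n-1).choose s := by
      have hset : P0 = Finset.powersetCard s ((Finset.univ : Finset (Fin n)).erase j) := by
        ext H
        rw [hP0_def, Finset.mem_filter, hP_def, Finset.mem_powersetCard,
          Finset.mem_powersetCard, Finset.subset_erase]
        tauto
      rw [hset, Finset.card_powersetCard, Finset.card_erase_of_mem (Finset.mem_univ j),
        Finset.card_univ, Fintype.card_fin]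
    have hnatid : n * ((n-1).choose s) = (n - s) * (n.choose s) := by
      have h := Nat.choose_mul_succ_eq (n-1) s
      have hn1 : n - 1 + 1 = n := by omega
      rw [hn1] at h
      calc n * ((n-1).choose s) = (n-1).choose s * n := by ring
        _ = n.choose s * (n - s) := h
        _ = (n - s) * (n.choose s) := by ring
    have hcne0 : ((PP.card:ℝ≥0∞)) ≠ 0 := by
      rw [hPcard]
      exact_mod_cast (Nat.choose_pos hs2).ne'
    have hcnetop : ((PP.card:ℝ≥0∞)) ≠ ⊤ := ENNReal.natCast_ne_top _
    have hdelta : ((PP.card:ℝ≥0∞))⁻¹ * ((P0.card:ℝ≥0∞) * ED) = ENNReal.ofReal (del/2) := by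
      have hnne0 : ((n:ℕ):ℝ≥0∞) ≠ 0 := by exact_mod_cast hn0.ne'
      have hkey : (P0.card:ℝ≥0∞) = ENNReal.ofReal q * (PP.card:ℝ≥0∞) := by
        have hq' : ENNReal.ofReal q = ((n-s:ℕ):ℝ≥0∞) * ((n:ℕ):ℝ≥0∞)⁻¹ := by
          rw [hq_def, ENNReal.ofReal_div_of_pos hnr, ← hnscast, ENNReal.ofReal_natCast,
            div_eq_mul_inv]
        have hnat' : (P0.card:ℝ≥0∞) * ((n:ℕ):ℝ≥0∞) = ((n-s:ℕ):ℝ≥0∞) * (PP.card:ℝ≥0∞) := by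
          rw [hPcard, hP0card]
          have h2 : ((n-1).choose s) * n = (n - s) * (n.choose s) := by
            rw [← hnatid]; ring
          exact_mod_cast h2
        calc (P0.card:ℝ≥0∞) = (P0.card:ℝ≥0∞) * (((n:ℕ):ℝ≥0∞) * ((n:ℕ):ℝ≥0∞)⁻¹) := by
              rw [ENNReal.mul_inv_cancel hnne0 (ENNReal.natCast_ne_top n), mul_one]
          _ = ((P0.card:ℝ≥0∞) * ((n:ℕ):ℝ≥0∞)) * ((n:ℕ):ℝ≥0∞)⁻¹ := by ring
          _ = (((n-s:ℕ):ℝ≥0∞) * (PP.card:ℝ≥0∞)) * ((n:ℕ):ℝ≥0∞)⁻¹ := by rw [hnat']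
          _ = ENNReal.ofReal q * (PP.card:ℝ≥0∞) := by rw [hq']; ring
      rw [hkey,
        show ((PP.card:ℝ≥0∞))⁻¹ * ((ENNReal.ofReal q * (PP.card:ℝ≥0∞)) * ED)
          = (((PP.card:ℝ≥0∞))⁻¹ * (PP.card:ℝ≥0∞)) * (ENNReal.ofReal q * ED) from by ring,
        ENNReal.inv_mul_cancel hcne0 hcnetop, one_mul, hED_def,
        ← ENNReal.ofReal_mul hq0.le]
      congr 1
      field_simp
    calc ((PP.card:ℝ≥0∞))⁻¹ * (A + B)
        ≤ ((PP.card:ℝ≥0∞))⁻¹ * (ENNReal.ofReal (1+q*β) * (A + B') + (P0.card:ℝ≥0∞) * ED) :=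
          mul_le_mul_right hmain _
      _ = ENNReal.ofReal (1+q*β) * (((PP.card:ℝ≥0∞))⁻¹ * (A + B'))
          + ((PP.card:ℝ≥0∞))⁻¹ * ((P0.card:ℝ≥0∞) * ED) := by ring
      _ = _ := by rw [hdelta, hexp_eq]


end ShuffledDP
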